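/- The discriminant of the polynomial f_m^{C_6}(X) = X^6 - 2mX^5 - 5(m+3)X^4 - 20X^3 + 5mX^2 + 2(m+3)X + 1 equals 6^6·(m^2+3m+9)^5, for any integer m. -/
import Mathlib

open Polynomial

/-- The simplest sextic polynomial over ℤ. -/
noncomputable def fC6 (m : ℤ) : ℤ[X] :=
  X^6 - C (2*m)*X^5 - C (5*(m+3))*X^4 - C 20*X^3 + C (5*m)*X^2 + C (2*(m+3))*X + 1

private theorem detFour4 (A : Matrix (Fin 4) (Fin 4) ℂ) :
    A.det = A 0 0 * (A 1 1 * (A 2 2 * (A 3 3) - A 2 3 * (A 3 2)) - A 1 2 * (A 2 1 * (A 3 3) - A 2 3 * (A 3 1)) + A 1 3 * (A 2 1 * (A 3 2) - A 2 2 * (A 3 1))) - A 0 1 * (A 1 0 * (A 2 2 * (A 3 3) - A 2 3 * (A 3 2)) - A 1 2 * (A 2 0 * (A 3 3) - A 2 3 * (A 3 0)) + A 1 3 * (A 2 0 * (A 3 2) - A 2 2 * (A 3 0))) + A 0 2 * (A 1 0 * (A 2 1 * (A 3 3) - A 2 3 * (A 3 1)) - A 1 1 * (A 2 0 * (A 3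 3) - A 2 3 * (A 3 0)) + A 1 3 * (A 2 0 * (A 3 1) - A 2 1 * (A 3 0))) - A 0 3 * (A 1 0 * (A 2 1 * (A 3 2) - A 2 2 * (A 3 1)) - A 1 1 * (A 2 0 * (A 3 2) - A 2 2 * (A 3 0)) + A 1 2 * (A 2 0 * (A 3 1) - A 2 1 * (A 3 0))) := by
  have s0 : (Fin.succ (0:Fin 3) : Fin 4) = 1 := rfl
  have s1 : (Fin.succ (1:Fin 3) : Fin 4) = 2 := rfl
  have s2 : (Fin.succ (2:Fin 3) : Fin 4) = 3 := rfl
  have t00 : Fin.succAbove (0:Fin 4) (0:Fin 3) = 1 := rfl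
  have t01 : Fin.succAbove (0:Fin 4) (1:Fin 3) = 2 := rfl
  have t02 : Fin.succAbove (0:Fin 4) (2:Fin 3) = 3 := rfl
  have t10 : Fin.succAbove (1:Fin 4) (0:Fin 3) = 0 := rfl
  have t11 : Fin.succAbove (1:Fin 4) (1:Fin 3) = 2 := rfl
  have t12 : Fin.succAbove (1:Fin 4) (2:Fin 3) = 3 := rfl
  have t20 : Fin.succAbove (2:Fin 4) (0:Fin 3) = 0 := rfl
  have t21 : Fin.succAbove (2:Fin 4) (1:Fin 3) = 1 := rfl
  have t22 : Fin.succAbove (2:Fin 4) (2:Fin 3) = 3 := rfl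
  have t30 : Fin.succAbove (3:Fin 4) (0:Fin 3) = 0 := rfl
  have t31 : Fin.succAbove (3:Fin 4) (1:Fin 3) = 1 := rfl
  have t32 : Fin.succAbove (3:Fin 4) (2:Fin 3) = 2 := rfl
  have v0 : ((0:Fin 4):ℕ) = 0 := rfl
  have v1 : ((1:Fin 4):ℕ) = 1 := rfl
  have v2 : ((2:Fin 4):ℕ) = 2 := rfl
  have v3 : ((3:Fin 4):ℕ) = 3 := rfl
  rw [Matrix.det_succ_row_zero, Fin.sum_univ_four]
  simp only [Matrix.det_fin_three, Matrix.submatrix_apply, s0, s1, s2, t00, t01, t02, t10, t11, t12, t20, t21, t22, t30, t31, t32, v0, v1, v2, v3]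
  ring

private theorem detFive5 (A : Matrix (Fin 5) (Fin 5) ℂ) :
    A.det = A 0 0 * (A 1 1 * (A 2 2 * (A 3 3 * (A 4 4) - A 3 4 * (A 4 3)) - A 2 3 * (A 3 2 * (A 4 4) - A 3 4 * (A 4 2)) + A 2 4 * (A 3 2 * (A 4 3) - A 3 3 * (A 4 2))) - A 1 2 * (A 2 1 * (A 3 3 * (A 4 4) - A 3 4 * (A 4 3)) - A 2 3 * (A 3 1 * (A 4 4) - A 3 4 * (A 4 1)) + A 2 4 * (A 3 1 * (A 4 3) - A 3 3 * (A 4 1))) + A 1 3 * (A 2 1 * (A 3 2 * (A 4 4) - A 3 4 * (A 4 2)) - A 2 2 * (A 3 1 * (A 4 4) - A 3 4 * (A 4 1)) + A 2 4 * (A 3 1 * (A 4 2) - A 3 2 * (A 4 1))) - A 1 4 * (A 2 1 * (A 3 2 * (A 4 3) - A 3 3 * (A 4 2)) - A 2 2 * (A 3 1 * (A 4 3) - A 3 3 * (A 4 1)) + A 2 3 * (A 3 1 * (A 4 2) - A 3 2 * (A 4 1)))) - A 0 1 * (A 1 0 * (A 2 2 * (A 3 3 * (A 4 4) - A 3 4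 * (A 4 3)) - A 2 3 * (A 3 2 * (A 4 4) - A 3 4 * (A 4 2)) + A 2 4 * (A 3 2 * (A 4 3) - A 3 3 * (A 4 2))) - A 1 2 * (A 2 0 * (A 3 3 * (A 4 4) - A 3 4 * (A 4 3)) - A 2 3 * (A 3 0 * (A 4 4) - A 3 4 * (A 4 0)) + A 2 4 * (A 3 0 * (A 4 3) - A 3 3 * (A 4 0))) + A 1 3 * (A 2 0 * (A 3 2 * (A 4 4) - A 3 4 * (A 4 2)) - A 2 2 * (A 3 0 * (A 4 4) - A 3 4 * (A 4 0)) + A 2 4 * (A 3 0 * (A 4 2) - A 3 2 * (A 4 0))) - A 1 4 * (A 2 0 * (A 3 2 * (A 4 3) - A 3 3 * (A 4 2)) - A 2 2 * (A 3 0 * (A 4 3) - A 3 3 * (A 4 0)) + A 2 3 * (A 3 0 * (A 4 2) - A 3 2 * (A 4 0)))) + A 0 2 * (A 1 0 * (A 2 1 * (A 3 3 * (A 4 4) - A 3 4 * (A 4 3)) - A 2 3 * (A 3 1 * (A 4 4) - A 3 4 * (A 4 1)) + A 2 4 * (A 3 1 * (A 4 3) - A 3 3 * (A 4 1))) - A 1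 1 * (A 2 0 * (A 3 3 * (A 4 4) - A 3 4 * (A 4 3)) - A 2 3 * (A 3 0 * (A 4 4) - A 3 4 * (A 4 0)) + A 2 4 * (A 3 0 * (A 4 3) - A 3 3 * (A 4 0))) + A 1 3 * (A 2 0 * (A 3 1 * (A 4 4) - A 3 4 * (A 4 1)) - A 2 1 * (A 3 0 * (A 4 4) - A 3 4 * (A 4 0)) + A 2 4 * (A 3 0 * (A 4 1) - A 3 1 * (A 4 0))) - A 1 4 * (A 2 0 * (A 3 1 * (A 4 3) - A 3 3 * (A 4 1)) - A 2 1 * (A 3 0 * (A 4 3) - A 3 3 * (A 4 0)) + A 2 3 * (A 3 0 * (A 4 1) - A 3 1 * (A 4 0)))) - A 0 3 * (A 1 0 * (A 2 1 * (A 3 2 * (A 4 4) - A 3 4 * (A 4 2)) - A 2 2 * (A 3 1 * (A 4 4) - A 3 4 * (A 4 1)) + A 2 4 * (A 3 1 * (A 4 2) - A 3 2 * (A 4 1))) - A 1 1 * (A 2 0 * (A 3 2 * (A 4 4) - A 3 4 * (A 4 2)) - A 2 2 * (A 3 0 * (A 4 4) - A 3 4 * (A 4 0)) + A 2 4 * (A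 3 0 * (A 4 2) - A 3 2 * (A 4 0))) + A 1 2 * (A 2 0 * (A 3 1 * (A 4 4) - A 3 4 * (A 4 1)) - A 2 1 * (A 3 0 * (A 4 4) - A 3 4 * (A 4 0)) + A 2 4 * (A 3 0 * (A 4 1) - A 3 1 * (A 4 0))) - A 1 4 * (A 2 0 * (A 3 1 * (A 4 2) - A 3 2 * (A 4 1)) - A 2 1 * (A 3 0 * (A 4 2) - A 3 2 * (A 4 0)) + A 2 2 * (A 3 0 * (A 4 1) - A 3 1 * (A 4 0)))) + A 0 4 * (A 1 0 * (A 2 1 * (A 3 2 * (A 4 3) - A 3 3 * (A 4 2)) - A 2 2 * (A 3 1 * (A 4 3) - A 3 3 * (A 4 1)) + A 2 3 * (A 3 1 * (A 4 2) - A 3 2 * (A 4 1))) - A 1 1 * (A 2 0 * (A 3 2 * (A 4 3) - A 3 3 * (A 4 2)) - A 2 2 * (A 3 0 * (A 4 3) - A 3 3 * (A 4 0)) + A 2 3 * (A 3 0 * (A 4 2) - A 3 2 * (A 4 0))) + A 1 2 * (A 2 0 * (A 3 1 * (A 4 3) - A 3 3 * (A 4 1)) - A 2 1 * (A 3 0 *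 (A 4 3) - A 3 3 * (A 4 0)) + A 2 3 * (A 3 0 * (A 4 1) - A 3 1 * (A 4 0))) - A 1 3 * (A 2 0 * (A 3 1 * (A 4 2) - A 3 2 * (A 4 1)) - A 2 1 * (A 3 0 * (A 4 2) - A 3 2 * (A 4 0)) + A 2 2 * (A 3 0 * (A 4 1) - A 3 1 * (A 4 0)))) := by
  have s0 : (Fin.succ (0:Fin 4) : Fin 5) = 1 := rfl
  have s1 : (Fin.succ (1:Fin 4) : Fin 5) = 2 := rfl
  have s2 : (Fin.succ (2:Fin 4) : Fin 5) = 3 := rfl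
  have s3 : (Fin.succ (3:Fin 4) : Fin 5) = 4 := rfl
  have t00 : Fin.succAbove (0:Fin 5) (0:Fin 4) = 1 := rfl
  have t01 : Fin.succAbove (0:Fin 5) (1:Fin 4) = 2 := rfl
  have t02 : Fin.succAbove (0:Fin 5) (2:Fin 4) = 3 := rfl
  have t03 : Fin.succAbove (0:Fin 5) (3:Fin 4) = 4 := rfl
  have t10 : Fin.succAbove (1:Fin 5) (0:Fin 4) = 0 := rfl
  have t11 : Fin.succAbove (1:Fin 5) (1:Fin 4) = 2 := rfl
  have t12 : Fin.succAbove (1:Fin 5) (2:Fin 4) = 3 := rfl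
  have t13 : Fin.succAbove (1:Fin 5) (3:Fin 4) = 4 := rfl
  have t20 : Fin.succAbove (2:Fin 5) (0:Fin 4) = 0 := rfl
  have t21 : Fin.succAbove (2:Fin 5) (1:Fin 4) = 1 := rfl
  have t22 : Fin.succAbove (2:Fin 5) (2:Fin 4) = 3 := rfl
  have t23 : Fin.succAbove (2:Fin 5) (3:Fin 4) = 4 := rfl
  have t30 : Fin.succAbove (3:Fin 5) (0:Fin 4) = 0 := rfl
  have t31 : Fin.succAbove (3:Fin 5) (1:Fin 4) = 1 := rfl
  have t32 : Fin.succAbove (3:Fin 5) (2:Fin 4) = 2 := rfl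
  have t33 : Fin.succAbove (3:Fin 5) (3:Fin 4) = 4 := rfl
  have t40 : Fin.succAbove (4:Fin 5) (0:Fin 4) = 0 := rfl
  have t41 : Fin.succAbove (4:Fin 5) (1:Fin 4) = 1 := rfl
  have t42 : Fin.succAbove (4:Fin 5) (2:Fin 4) = 2 := rfl
  have t43 : Fin.succAbove (4:Fin 5) (3:Fin 4) = 3 := rfl
  have v0 : ((0:Fin 5):ℕ) = 0 := rfl
  have v1 : ((1:Fin 5):ℕ) = 1 := rfl
  have v2 : ((2:Fin 5):ℕ) = 2 := rfl
  have v3 : ((3:Fin 5):ℕ) = 3 := rfl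
  have v4 : ((4:Fin 5):ℕ) = 4 := rfl
  rw [Matrix.det_succ_row_zero, Fin.sum_univ_five]
  simp only [detFour4, Matrix.submatrix_apply, s0, s1, s2, s3, t00, t01, t02, t03, t10, t11, t12, t13, t20, t21, t22, t23, t30, t31, t32, t33, t40, t41, t42, t43, v0, v1, v2, v3, v4]
  ring

set_option maxHeartbeats 1000000 in
/-- The discriminant of the monic sextic `fC6 m`, expressed via its complex roots:
if `fC6 m` splits over `ℂ` with roots `r 0, …, r 5`, then
`∏_{i<j} (r i - r j)^2 = 6^6 (m^2+3m+9)^5`. -/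
theorem stmt8 (m : ℤ) (r : Fin 6 → ℂ)
    (h : (fC6 m).map (Int.castRingHom ℂ) = ∏ i, (X - C (r i))) :
    (∏ i, ∏ j ∈ Finset.Ioi i, (r i - r j)^2) = 6^6 * (m^2+3*m+9)^5 := by
  have hroot : ∀ i : Fin 6, (r i)^6 - 2*(m:ℂ)*(r i)^5 - 5*((m:ℂ)+3)*(r i)^4 - 20*(r i)^3
      + 5*(m:ℂ)*(r i)^2 + 2*((m:ℂ)+3)*(r i) + 1 = 0 := by
    intro i
    have h2 := congrArg (Polynomial.eval (r i)) h
    simp [fC6, Polynomial.eval_prod] at h2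
    rw [Finset.prod_eq_zero (Finset.mem_univ i) (by ring)] at h2
    linear_combination h2
  have h0 : ((0:ℂ) - r 0) * ((0:ℂ) - r 1) * ((0:ℂ) - r 2) * ((0:ℂ) - r 3) * ((0:ℂ) - r 4) * ((0:ℂ) - r 5) = (1) := by
    have h2 := congrArg (Polynomial.eval ((0:ℂ))) h
    simp [fC6, Polynomial.eval_prod, Fin.prod_univ_six] at h2
    push_cast at h2
    linear_combination -h2
  have h1 : ((1:ℂ) - r 0) * ((1:ℂ) - r 1) * ((1:ℂ) - r 2) * ((1:ℂ) - r 3) * ((1:ℂ) - r 4) * ((1:ℂ) - r 5) = (-27) := by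
    have h2 := congrArg (Polynomial.eval ((1:ℂ))) h
    simp [fC6, Polynomial.eval_prod, Fin.prod_univ_six] at h2
    push_cast at h2
    linear_combination -h2
  have hm1 : ((-1:ℂ) - r 0) * ((-1:ℂ) - r 1) * ((-1:ℂ) - r 2) * ((-1:ℂ) - r 3) * ((-1:ℂ) - r 4) * ((-1:ℂ) - r 5) = (1) := by
    have h2 := congrArg (Polynomial.eval ((-1:ℂ))) h
    simp [fC6, Polynomial.eval_prod, Fin.prod_univ_six] at h2
    push_cast at h2
    linear_combination -h2
  have h2 : ((2:ℂ) - r 0) * ((2:ℂ) - r 1) * ((2:ℂ) - r 2) * ((2:ℂ) - r 3) * ((2:ℂ) - r 4) * ((2:ℂ) - r 5) = ((-120)*(m:ℂ) + (-323)) := by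
    have h2 := congrArg (Polynomial.eval ((2:ℂ))) h
    simp [fC6, Polynomial.eval_prod, Fin.prod_univ_six] at h2
    push_cast at h2
    linear_combination -h2
  have hm2 : ((-2:ℂ) - r 0) * ((-2:ℂ) - r 1) * ((-2:ℂ) - r 2) * ((-2:ℂ) - r 3) * ((-2:ℂ) - r 4) * ((-2:ℂ) - r 5) = (-27) := by
    have h2 := congrArg (Polynomial.eval ((-2:ℂ))) h
    simp [fC6, Polynomial.eval_prod, Fin.prod_univ_six] at h2
    push_cast at h2
    linear_combination -h2
  have h3 : ((3:ℂ) - r 0) * ((3:ℂ) - r 1) * ((3:ℂ) - r 2) * ((3:ℂ) - r 3) * ((3:ℂ) - r 4) * ((3:ℂ) - r 5) = ((-840)*(m:ℂ) + (-1007)) := by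
    have h2 := congrArg (Polynomial.eval ((3:ℂ))) h
    simp [fC6, Polynomial.eval_prod, Fin.prod_univ_six] at h2
    push_cast at h2
    linear_combination -h2
  have he1 : r 0 + r 1 + r 2 + r 3 + r 4 + r 5 = (2*(m:ℂ)) := by
    linear_combination (1/12 : ℂ) * h0 + (-1/12 : ℂ) * h1 + (-1/24 : ℂ) * hm1 + (1/24 : ℂ) * h2 + (1/120 : ℂ) * hm2 + (-1/120 : ℂ) * h3
  have he2 : r 0 * r 1 + r 0 * r 2 + r 0 * r 3 + r 0 * r 4 + r 0 * r 5 + r 1 * r 2 + r 1 * r 3 + r 1 * r 4 + r 1 * r 5 + r 2 * r 3 + r 2 * r 4 + r 2 * r 5 + r 3 * r 4 + r 3 * r 5 + r 4 * r 5 = (-5*((m:ℂ)+3)) := by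
    linear_combination (1/4 : ℂ) * h0 + (-1/6 : ℂ) * h1 + (-1/6 : ℂ) * hm1 + (1/24 : ℂ) * h2 + (1/24 : ℂ) * hm2
  have he3 : r 0 * r 1 * r 2 + r 0 * r 1 * r 3 + r 0 * r 1 * r 4 + r 0 * r 1 * r 5 + r 0 * r 2 * r 3 + r 0 * r 2 * r 4 + r 0 * r 2 * r 5 + r 0 * r 3 * r 4 + r 0 * r 3 * r 5 + r 0 * r 4 * r 5 + r 1 * r 2 * r 3 + r 1 * r 2 * r 4 + r 1 * r 2 * r 5 + r 1 * r 3 * r 4 + r 1 * r 3 * r 5 + r 1 * r 4 * r 5 + r 2 * r 3 * r 4 + r 2 * r 3 * r 5 + r 2 * r 4 * r 5 + r 3 * r 4 * r 5 = (20:ℂ) := by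
    linear_combination (-5/12 : ℂ) * h0 + (7/12 : ℂ) * h1 + (1/24 : ℂ) * hm1 + (-7/24 : ℂ) * h2 + (1/24 : ℂ) * hm2 + (1/24 : ℂ) * h3
  have he4 : r 0 * r 1 * r 2 * r 3 + r 0 * r 1 * r 2 * r 4 + r 0 * r 1 * r 2 * r 5 + r 0 * r 1 * r 3 * r 4 + r 0 * r 1 * r 3 * r 5 + r 0 * r 1 * r 4 * r 5 + r 0 * r 2 * r 3 * r 4 + r 0 * r 2 * r 3 * r 5 + r 0 * r 2 * r 4 * r 5 + r 0 * r 3 * r 4 * r 5 + r 1 * r 2 * r 3 * r 4 + r 1 * r 2 * r 3 * r 5 + r 1 * r 2 * r 4 * r 5 + r 1 * r 3 * r 4 * r 5 + r 2 * r 3 * r 4 * r 5 = (5*(m:ℂ)) := by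
    linear_combination (-5/4 : ℂ) * h0 + (2/3 : ℂ) * h1 + (2/3 : ℂ) * hm1 + (-1/24 : ℂ) * h2 + (-1/24 : ℂ) * hm2
  have he5 : r 0 * r 1 * r 2 * r 3 * r 4 + r 0 * r 1 * r 2 * r 3 * r 5 + r 0 * r 1 * r 2 * r 4 * r 5 + r 0 * r 1 * r 3 * r 4 * r 5 + r 0 * r 2 * r 3 * r 4 * r 5 + r 1 * r 2 * r 3 * r 4 * r 5 = (-2*((m:ℂ)+3)) := by
    linear_combination (1/3 : ℂ) * h0 + (-1 : ℂ) * h1 + (1/2 : ℂ) * hm1 + (1/4 : ℂ) * h2 + (-1/20 : ℂ) * hm2 + (-1/30 : ℂ) * h3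
  have he6 : r 0 * r 1 * r 2 * r 3 * r 4 * r 5 = (1:ℂ) := by
    linear_combination (1 : ℂ) * h0
  have hp1 : r 0^1 + r 1^1 + r 2^1 + r 3^1 + r 4^1 + r 5^1 = ((2)*(m:ℂ)) := by
    linear_combination ((1) : ℂ) * he1
  have hp2 : r 0^2 + r 1^2 + r 2^2 + r 3^2 + r 4^2 + r 5^2 = ((4)*(m:ℂ)^2 + (10)*(m:ℂ) + (30)) := by
    linear_combination (1 : ℂ) * (r 0 + r 1 + r 2 + r 3 + r 4 + r 5) * hp1 + (1 : ℂ) * ((2)*(m:ℂ)) * he1 + ((-2) : ℂ) * he2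
  have hp3 : r 0^3 + r 1^3 + r 2^3 + r 3^3 + r 4^3 + r 5^3 = ((8)*(m:ℂ)^3 + (30)*(m:ℂ)^2 + (90)*(m:ℂ) + (60)) := by
    linear_combination (1 : ℂ) * (r 0 + r 1 + r 2 + r 3 + r 4 + r 5) * hp2 + (1 : ℂ) * ((4)*(m:ℂ)^2 + (10)*(m:ℂ) + (30)) * he1 + (-1 : ℂ) * (r 0 * r 1 + r 0 * r 2 + r 0 * r 3 + r 0 * r 4 + r 0 * r 5 + r 1 * r 2 + r 1 * r 3 + r 1 * r 4 + r 1 * r 5 + r 2 * r 3 + r 2 * r 4 + r 2 * r 5 + r 3 * r 4 + r 3 * r 5 + r 4 * r 5) * hp1 + (-1 : ℂ) * ((2)*(m:ℂ)) * he2 + ((3) : ℂ) * he3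
  have hp4 : r 0^4 + r 1^4 + r 2^4 + r 3^4 + r 4^4 + r 5^4 = ((16)*(m:ℂ)^4 + (80)*(m:ℂ)^3 + (290)*(m:ℂ)^2 + (440)*(m:ℂ) + (450)) := by
    linear_combination (1 : ℂ) * (r 0 + r 1 + r 2 + r 3 + r 4 + r 5) * hp3 + (1 : ℂ) * ((8)*(m:ℂ)^3 + (30)*(m:ℂ)^2 + (90)*(m:ℂ) + (60)) * he1 + (-1 : ℂ) * (r 0 * r 1 + r 0 * r 2 + r 0 * r 3 + r 0 * r 4 + r 0 * r 5 + r 1 * r 2 + r 1 * r 3 + r 1 * r 4 + r 1 * r 5 + r 2 * r 3 + r 2 * r 4 + r 2 * r 5 + r 3 * r 4 + r 3 * r 5 + r 4 * r 5) * hp2 + (-1 : ℂ) * ((4)*(m:ℂ)^2 + (10)*(m:ℂ) + (30)) * he2 + (1 : ℂ) * (r 0 * r 1 * r 2 + r 0 * r 1 * r 3 + r 0 * r 1 * r 4 + r 0 * r 1 * r 5 + r 0 * r 2 * r 3 + r 0 * r 2 * r 4 + r 0 * r 2 * r 5 + r 0 * r 3 * r 4 + r 0 * r 3 * r 5 + r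 0 * r 4 * r 5 + r 1 * r 2 * r 3 + r 1 * r 2 * r 4 + r 1 * r 2 * r 5 + r 1 * r 3 * r 4 + r 1 * r 3 * r 5 + r 1 * r 4 * r 5 + r 2 * r 3 * r 4 + r 2 * r 3 * r 5 + r 2 * r 4 * r 5 + r 3 * r 4 * r 5) * hp1 + (1 : ℂ) * ((2)*(m:ℂ)) * he3 + ((-4) : ℂ) * he4
  have hp5 : r 0^5 + r 1^5 + r 2^5 + r 3^5 + r 4^5 + r 5^5 = ((32)*(m:ℂ)^5 + (200)*(m:ℂ)^4 + (850)*(m:ℂ)^3 + (1850)*(m:ℂ)^2 + (2740)*(m:ℂ) + (1470)) := by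
    linear_combination (1 : ℂ) * (r 0 + r 1 + r 2 + r 3 + r 4 + r 5) * hp4 + (1 : ℂ) * ((16)*(m:ℂ)^4 + (80)*(m:ℂ)^3 + (290)*(m:ℂ)^2 + (440)*(m:ℂ) + (450)) * he1 + (-1 : ℂ) * (r 0 * r 1 + r 0 * r 2 + r 0 * r 3 + r 0 * r 4 + r 0 * r 5 + r 1 * r 2 + r 1 * r 3 + r 1 * r 4 + r 1 * r 5 + r 2 * r 3 + r 2 * r 4 + r 2 * r 5 + r 3 * r 4 + r 3 * r 5 + r 4 * r 5) * hp3 + (-1 : ℂ) * ((8)*(m:ℂ)^3 + (30)*(m:ℂ)^2 + (90)*(m:ℂ) + (60)) * he2 + (1 : ℂ) * (r 0 * r 1 * r 2 + r 0 * r 1 * r 3 + r 0 * r 1 * r 4 + r 0 * r 1 * r 5 + r 0 * r 2 * r 3 + r 0 * r 2 * r 4 + r 0 * r 2 * r 5 + r 0 * r 3 * r 4 + r 0 * r 3 * r 5 + r 0 * r 4 * r 5 + r 1 * r 2 * r 3 + r 1 * r 2 * r 4 + r 1 * r 2 * r 5 + r 1 * r 3 * r 4 + r 1 * r 3 * r 5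 + r 1 * r 4 * r 5 + r 2 * r 3 * r 4 + r 2 * r 3 * r 5 + r 2 * r 4 * r 5 + r 3 * r 4 * r 5) * hp2 + (1 : ℂ) * ((4)*(m:ℂ)^2 + (10)*(m:ℂ) + (30)) * he3 + (-1 : ℂ) * (r 0 * r 1 * r 2 * r 3 + r 0 * r 1 * r 2 * r 4 + r 0 * r 1 * r 2 * r 5 + r 0 * r 1 * r 3 * r 4 + r 0 * r 1 * r 3 * r 5 + r 0 * r 1 * r 4 * r 5 + r 0 * r 2 * r 3 * r 4 + r 0 * r 2 * r 3 * r 5 + r 0 * r 2 * r 4 * r 5 + r 0 * r 3 * r 4 * r 5 + r 1 * r 2 * r 3 * r 4 + r 1 * r 2 * r 3 * r 5 + r 1 * r 2 * r 4 * r 5 + r 1 * r 3 * r 4 * r 5 + r 2 * r 3 * r 4 * r 5) * hp1 + (-1 : ℂ) * ((2)*(m:ℂ)) * he4 + ((5) : ℂ) * he5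
  have hp6 : r 0^6 + r 1^6 + r 2^6 + r 3^6 + r 4^6 + r 5^6 = ((64)*(m:ℂ)^6 + (480)*(m:ℂ)^5 + (2340)*(m:ℂ)^4 + (6490)*(m:ℂ)^3 + (12576)*(m:ℂ)^2 + (13428)*(m:ℂ) + (7944)) := by
    linear_combination hroot 0 + hroot 1 + hroot 2 + hroot 3 + hroot 4 + hroot 5 + (2*(m:ℂ)) * hp5 + (5*((m:ℂ)+3)) * hp4 + (20:ℂ) * hp3 + (-5*(m:ℂ)) * hp2 + (-2*((m:ℂ)+3)) * hp1
  have hp7 : r 0^7 + r 1^7 + r 2^7 + r 3^7 + r 4^7 + r 5^7 = ((128)*(m:ℂ)^7 + (1120)*(m:ℂ)^6 + (6160)*(m:ℂ)^5 + (20510)*(m:ℂ)^4 + (48594)*(m:ℂ)^3 + (73612)*(m:ℂ)^2 + (72716)*(m:ℂ) + (30870)) := by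
    linear_combination (r 0) * hroot 0 + (r 1) * hroot 1 + (r 2) * hroot 2 + (r 3) * hroot 3 + (r 4) * hroot 4 + (r 5) * hroot 5 + (2*(m:ℂ)) * hp6 + (5*((m:ℂ)+3)) * hp5 + (20:ℂ) * hp4 + (-5*(m:ℂ)) * hp3 + (-2*((m:ℂ)+3)) * hp2 + (-1:ℂ) * hp1
  have hp8 : r 0^8 + r 1^8 + r 2^8 + r 3^8 + r 4^8 + r 5^8 = ((256)*(m:ℂ)^8 + (2560)*(m:ℂ)^7 + (15680)*(m:ℂ)^6 + (60480)*(m:ℂ)^5 + (168322)*(m:ℂ)^4 + (322896)*(m:ℂ)^3 + (435648)*(m:ℂ)^2 + (354760)*(m:ℂ) + (148170)) := by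
    linear_combination (r 0)^2 * hroot 0 + (r 1)^2 * hroot 1 + (r 2)^2 * hroot 2 + (r 3)^2 * hroot 3 + (r 4)^2 * hroot 4 + (r 5)^2 * hroot 5 + (2*(m:ℂ)) * hp7 + (5*((m:ℂ)+3)) * hp6 + (20:ℂ) * hp5 + (-5*(m:ℂ)) * hp4 + (-2*((m:ℂ)+3)) * hp3 + (-1:ℂ) * hp2
  have hp9 : r 0^9 + r 1^9 + r 2^9 + r 3^9 + r 4^9 + r 5^9 = ((512)*(m:ℂ)^9 + (5760)*(m:ℂ)^8 + (38880)*(m:ℂ)^7 + (169680)*(m:ℂ)^6 + (540162)*(m:ℂ)^5 + (1238706)*(m:ℂ)^4 + (2087748)*(m:ℂ)^3 + (2412450)*(m:ℂ)^2 + (1799010)*(m:ℂ) + (619170)) := by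
    linear_combination (r 0)^3 * hroot 0 + (r 1)^3 * hroot 1 + (r 2)^3 * hroot 2 + (r 3)^3 * hroot 3 + (r 4)^3 * hroot 4 + (r 5)^3 * hroot 5 + (2*(m:ℂ)) * hp8 + (5*((m:ℂ)+3)) * hp7 + (20:ℂ) * hp6 + (-5*(m:ℂ)) * hp5 + (-2*((m:ℂ)+3)) * hp4 + (-1:ℂ) * hp3
  have hp10 : r 0^10 + r 1^10 + r 2^10 + r 3^10 + r 4^10 + r 5^10 = ((1024)*(m:ℂ)^10 + (12800)*(m:ℂ)^9 + (94400)*(m:ℂ)^8 + (458400)*(m:ℂ)^7 + (1637860)*(m:ℂ)^6 + (4337130)*(m:ℂ)^5 + (8689640)*(m:ℂ)^4 + (12746700)*(m:ℂ)^3 + (13294770)*(m:ℂ)^2 + (8695370)*(m:ℂ) + (2830680)) := by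
    linear_combination (r 0)^4 * hroot 0 + (r 1)^4 * hroot 1 + (r 2)^4 * hroot 2 + (r 3)^4 * hroot 3 + (r 4)^4 * hroot 4 + (r 5)^4 * hroot 5 + (2*(m:ℂ)) * hp9 + (5*((m:ℂ)+3)) * hp8 + (20:ℂ) * hp7 + (-5*(m:ℂ)) * hp6 + (-2*((m:ℂ)+3)) * hp5 + (-1:ℂ) * hp4
  set W : Matrix (Fin 6) (Fin 6) ℂ := (Matrix.vandermonde r).transpose * Matrix.vandermonde r with hWdef
  have hWgen : ∀ i j : Fin 6, W i j = ∑ k : Fin 6, r k ^ ((i:ℕ)+(j:ℕ)) := by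
    intro i j
    simp [hWdef, Matrix.mul_apply, Matrix.transpose_apply, Matrix.vandermonde, pow_add]
  have hW00 : W 0 0 = (6:ℂ) := by
    rw [hWgen]
    norm_num [Fin.sum_univ_six]
  have hW01 : W 0 1 = ((2)*(m:ℂ)) := by
    rw [hWgen]
    have : ((0:Fin 6):ℕ) + ((1:Fin 6):ℕ) = 1 := rfl
    rw [this, Fin.sum_univ_six]
    linear_combination hp1
  have hW02 : W 0 2 = ((4)*(m:ℂ)^2 + (10)*(m:ℂ) + (30)) := by
    rw [hWgen]
    have : ((0:Fin 6):ℕ) + ((2:Fin 6):ℕ) = 2 := rfl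
    rw [this, Fin.sum_univ_six]
    linear_combination hp2
  have hW03 : W 0 3 = ((8)*(m:ℂ)^3 + (30)*(m:ℂ)^2 + (90)*(m:ℂ) + (60)) := by
    rw [hWgen]
    have : ((0:Fin 6):ℕ) + ((3:Fin 6):ℕ) = 3 := rfl
    rw [this, Fin.sum_univ_six]
    linear_combination hp3
  have hW04 : W 0 4 = ((16)*(m:ℂ)^4 + (80)*(m:ℂ)^3 + (290)*(m:ℂ)^2 + (440)*(m:ℂ) + (450)) := by
    rw [hWgen]
    have : ((0:Fin 6):ℕ) + ((4:Fin 6):ℕ) = 4 := rfl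
    rw [this, Fin.sum_univ_six]
    linear_combination hp4
  have hW05 : W 0 5 = ((32)*(m:ℂ)^5 + (200)*(m:ℂ)^4 + (850)*(m:ℂ)^3 + (1850)*(m:ℂ)^2 + (2740)*(m:ℂ) + (1470)) := by
    rw [hWgen]
    have : ((0:Fin 6):ℕ) + ((5:Fin 6):ℕ) = 5 := rfl
    rw [this, Fin.sum_univ_six]
    linear_combination hp5
  have hW10 : W 1 0 = ((2)*(m:ℂ)) := by
    rw [hWgen]
    have : ((1:Fin 6):ℕ) + ((0:Fin 6):ℕ) = 1 := rfl
    rw [this, Fin.sum_univ_six]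
    linear_combination hp1
  have hW11 : W 1 1 = ((4)*(m:ℂ)^2 + (10)*(m:ℂ) + (30)) := by
    rw [hWgen]
    have : ((1:Fin 6):ℕ) + ((1:Fin 6):ℕ) = 2 := rfl
    rw [this, Fin.sum_univ_six]
    linear_combination hp2
  have hW12 : W 1 2 = ((8)*(m:ℂ)^3 + (30)*(m:ℂ)^2 + (90)*(m:ℂ) + (60)) := by
    rw [hWgen]
    have : ((1:Fin 6):ℕ) + ((2:Fin 6):ℕ) = 3 := rfl
    rw [this, Fin.sum_univ_six]
    linear_combination hp3
  have hW13 : W 1 3 = ((16)*(m:ℂ)^4 + (80)*(m:ℂ)^3 + (290)*(m:ℂ)^2 + (440)*(m:ℂ) + (450)) := by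
    rw [hWgen]
    have : ((1:Fin 6):ℕ) + ((3:Fin 6):ℕ) = 4 := rfl
    rw [this, Fin.sum_univ_six]
    linear_combination hp4
  have hW14 : W 1 4 = ((32)*(m:ℂ)^5 + (200)*(m:ℂ)^4 + (850)*(m:ℂ)^3 + (1850)*(m:ℂ)^2 + (2740)*(m:ℂ) + (1470)) := by
    rw [hWgen]
    have : ((1:Fin 6):ℕ) + ((4:Fin 6):ℕ) = 5 := rfl
    rw [this, Fin.sum_univ_six]
    linear_combination hp5
  have hW15 : W 1 5 = ((64)*(m:ℂ)^6 + (480)*(m:ℂ)^5 + (2340)*(m:ℂ)^4 + (6490)*(m:ℂ)^3 + (12576)*(m:ℂ)^2 + (13428)*(m:ℂ) + (7944)) := by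
    rw [hWgen]
    have : ((1:Fin 6):ℕ) + ((5:Fin 6):ℕ) = 6 := rfl
    rw [this, Fin.sum_univ_six]
    linear_combination hp6
  have hW20 : W 2 0 = ((4)*(m:ℂ)^2 + (10)*(m:ℂ) + (30)) := by
    rw [hWgen]
    have : ((2:Fin 6):ℕ) + ((0:Fin 6):ℕ) = 2 := rfl
    rw [this, Fin.sum_univ_six]
    linear_combination hp2
  have hW21 : W 2 1 = ((8)*(m:ℂ)^3 + (30)*(m:ℂ)^2 + (90)*(m:ℂ) + (60)) := by
    rw [hWgen]
    have : ((2:Fin 6):ℕ) + ((1:Fin 6):ℕ) = 3 := rfl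
    rw [this, Fin.sum_univ_six]
    linear_combination hp3
  have hW22 : W 2 2 = ((16)*(m:ℂ)^4 + (80)*(m:ℂ)^3 + (290)*(m:ℂ)^2 + (440)*(m:ℂ) + (450)) := by
    rw [hWgen]
    have : ((2:Fin 6):ℕ) + ((2:Fin 6):ℕ) = 4 := rfl
    rw [this, Fin.sum_univ_six]
    linear_combination hp4
  have hW23 : W 2 3 = ((32)*(m:ℂ)^5 + (200)*(m:ℂ)^4 + (850)*(m:ℂ)^3 + (1850)*(m:ℂ)^2 + (2740)*(m:ℂ) + (1470)) := by
    rw [hWgen]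
    have : ((2:Fin 6):ℕ) + ((3:Fin 6):ℕ) = 5 := rfl
    rw [this, Fin.sum_univ_six]
    linear_combination hp5
  have hW24 : W 2 4 = ((64)*(m:ℂ)^6 + (480)*(m:ℂ)^5 + (2340)*(m:ℂ)^4 + (6490)*(m:ℂ)^3 + (12576)*(m:ℂ)^2 + (13428)*(m:ℂ) + (7944)) := by
    rw [hWgen]
    have : ((2:Fin 6):ℕ) + ((4:Fin 6):ℕ) = 6 := rfl
    rw [this, Fin.sum_univ_six]
    linear_combination hp6
  have hW25 : W 2 5 = ((128)*(m:ℂ)^7 + (1120)*(m:ℂ)^6 + (6160)*(m:ℂ)^5 + (20510)*(m:ℂ)^4 + (48594)*(m:ℂ)^3 + (73612)*(m:ℂ)^2 + (72716)*(m:ℂ) + (30870)) := by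
    rw [hWgen]
    have : ((2:Fin 6):ℕ) + ((5:Fin 6):ℕ) = 7 := rfl
    rw [this, Fin.sum_univ_six]
    linear_combination hp7
  have hW30 : W 3 0 = ((8)*(m:ℂ)^3 + (30)*(m:ℂ)^2 + (90)*(m:ℂ) + (60)) := by
    rw [hWgen]
    have : ((3:Fin 6):ℕ) + ((0:Fin 6):ℕ) = 3 := rfl
    rw [this, Fin.sum_univ_six]
    linear_combination hp3
  have hW31 : W 3 1 = ((16)*(m:ℂ)^4 + (80)*(m:ℂ)^3 + (290)*(m:ℂ)^2 + (440)*(m:ℂ) + (450)) := by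
    rw [hWgen]
    have : ((3:Fin 6):ℕ) + ((1:Fin 6):ℕ) = 4 := rfl
    rw [this, Fin.sum_univ_six]
    linear_combination hp4
  have hW32 : W 3 2 = ((32)*(m:ℂ)^5 + (200)*(m:ℂ)^4 + (850)*(m:ℂ)^3 + (1850)*(m:ℂ)^2 + (2740)*(m:ℂ) + (1470)) := by
    rw [hWgen]
    have : ((3:Fin 6):ℕ) + ((2:Fin 6):ℕ) = 5 := rfl
    rw [this, Fin.sum_univ_six]
    linear_combination hp5
  have hW33 : W 3 3 = ((64)*(m:ℂ)^6 + (480)*(m:ℂ)^5 + (2340)*(m:ℂ)^4 + (6490)*(m:ℂ)^3 + (12576)*(m:ℂ)^2 + (13428)*(m:ℂ) + (7944)) := by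
    rw [hWgen]
    have : ((3:Fin 6):ℕ) + ((3:Fin 6):ℕ) = 6 := rfl
    rw [this, Fin.sum_univ_six]
    linear_combination hp6
  have hW34 : W 3 4 = ((128)*(m:ℂ)^7 + (1120)*(m:ℂ)^6 + (6160)*(m:ℂ)^5 + (20510)*(m:ℂ)^4 + (48594)*(m:ℂ)^3 + (73612)*(m:ℂ)^2 + (72716)*(m:ℂ) + (30870)) := by
    rw [hWgen]
    have : ((3:Fin 6):ℕ) + ((4:Fin 6):ℕ) = 7 := rfl
    rw [this, Fin.sum_univ_six]
    linear_combination hp7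
  have hW35 : W 3 5 = ((256)*(m:ℂ)^8 + (2560)*(m:ℂ)^7 + (15680)*(m:ℂ)^6 + (60480)*(m:ℂ)^5 + (168322)*(m:ℂ)^4 + (322896)*(m:ℂ)^3 + (435648)*(m:ℂ)^2 + (354760)*(m:ℂ) + (148170)) := by
    rw [hWgen]
    have : ((3:Fin 6):ℕ) + ((5:Fin 6):ℕ) = 8 := rfl
    rw [this, Fin.sum_univ_six]
    linear_combination hp8
  have hW40 : W 4 0 = ((16)*(m:ℂ)^4 + (80)*(m:ℂ)^3 + (290)*(m:ℂ)^2 + (440)*(m:ℂ) + (450)) := by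
    rw [hWgen]
    have : ((4:Fin 6):ℕ) + ((0:Fin 6):ℕ) = 4 := rfl
    rw [this, Fin.sum_univ_six]
    linear_combination hp4
  have hW41 : W 4 1 = ((32)*(m:ℂ)^5 + (200)*(m:ℂ)^4 + (850)*(m:ℂ)^3 + (1850)*(m:ℂ)^2 + (2740)*(m:ℂ) + (1470)) := by
    rw [hWgen]
    have : ((4:Fin 6):ℕ) + ((1:Fin 6):ℕ) = 5 := rfl
    rw [this, Fin.sum_univ_six]
    linear_combination hp5
  have hW42 : W 4 2 = ((64)*(m:ℂ)^6 + (480)*(m:ℂ)^5 + (2340)*(m:ℂ)^4 + (6490)*(m:ℂ)^3 + (12576)*(m:ℂ)^2 + (13428)*(m:ℂ) + (7944)) := by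
    rw [hWgen]
    have : ((4:Fin 6):ℕ) + ((2:Fin 6):ℕ) = 6 := rfl
    rw [this, Fin.sum_univ_six]
    linear_combination hp6
  have hW43 : W 4 3 = ((128)*(m:ℂ)^7 + (1120)*(m:ℂ)^6 + (6160)*(m:ℂ)^5 + (20510)*(m:ℂ)^4 + (48594)*(m:ℂ)^3 + (73612)*(m:ℂ)^2 + (72716)*(m:ℂ) + (30870)) := by
    rw [hWgen]
    have : ((4:Fin 6):ℕ) + ((3:Fin 6):ℕ) = 7 := rfl
    rw [this, Fin.sum_univ_six]
    linear_combination hp7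
  have hW44 : W 4 4 = ((256)*(m:ℂ)^8 + (2560)*(m:ℂ)^7 + (15680)*(m:ℂ)^6 + (60480)*(m:ℂ)^5 + (168322)*(m:ℂ)^4 + (322896)*(m:ℂ)^3 + (435648)*(m:ℂ)^2 + (354760)*(m:ℂ) + (148170)) := by
    rw [hWgen]
    have : ((4:Fin 6):ℕ) + ((4:Fin 6):ℕ) = 8 := rfl
    rw [this, Fin.sum_univ_six]
    linear_combination hp8
  have hW45 : W 4 5 = ((512)*(m:ℂ)^9 + (5760)*(m:ℂ)^8 + (38880)*(m:ℂ)^7 + (169680)*(m:ℂ)^6 + (540162)*(m:ℂ)^5 + (1238706)*(m:ℂ)^4 + (2087748)*(m:ℂ)^3 + (2412450)*(m:ℂ)^2 + (1799010)*(m:ℂ) + (619170)) := by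
    rw [hWgen]
    have : ((4:Fin 6):ℕ) + ((5:Fin 6):ℕ) = 9 := rfl
    rw [this, Fin.sum_univ_six]
    linear_combination hp9
  have hW50 : W 5 0 = ((32)*(m:ℂ)^5 + (200)*(m:ℂ)^4 + (850)*(m:ℂ)^3 + (1850)*(m:ℂ)^2 + (2740)*(m:ℂ) + (1470)) := by
    rw [hWgen]
    have : ((5:Fin 6):ℕ) + ((0:Fin 6):ℕ) = 5 := rfl
    rw [this, Fin.sum_univ_six]
    linear_combination hp5
  have hW51 : W 5 1 = ((64)*(m:ℂ)^6 + (480)*(m:ℂ)^5 + (2340)*(m:ℂ)^4 + (6490)*(m:ℂ)^3 + (12576)*(m:ℂ)^2 + (13428)*(m:ℂ) + (7944)) := by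
    rw [hWgen]
    have : ((5:Fin 6):ℕ) + ((1:Fin 6):ℕ) = 6 := rfl
    rw [this, Fin.sum_univ_six]
    linear_combination hp6
  have hW52 : W 5 2 = ((128)*(m:ℂ)^7 + (1120)*(m:ℂ)^6 + (6160)*(m:ℂ)^5 + (20510)*(m:ℂ)^4 + (48594)*(m:ℂ)^3 + (73612)*(m:ℂ)^2 + (72716)*(m:ℂ) + (30870)) := by
    rw [hWgen]
    have : ((5:Fin 6):ℕ) + ((2:Fin 6):ℕ) = 7 := rfl
    rw [this, Fin.sum_univ_six]
    linear_combination hp7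
  have hW53 : W 5 3 = ((256)*(m:ℂ)^8 + (2560)*(m:ℂ)^7 + (15680)*(m:ℂ)^6 + (60480)*(m:ℂ)^5 + (168322)*(m:ℂ)^4 + (322896)*(m:ℂ)^3 + (435648)*(m:ℂ)^2 + (354760)*(m:ℂ) + (148170)) := by
    rw [hWgen]
    have : ((5:Fin 6):ℕ) + ((3:Fin 6):ℕ) = 8 := rfl
    rw [this, Fin.sum_univ_six]
    linear_combination hp8
  have hW54 : W 5 4 = ((512)*(m:ℂ)^9 + (5760)*(m:ℂ)^8 + (38880)*(m:ℂ)^7 + (169680)*(m:ℂ)^6 + (540162)*(m:ℂ)^5 + (1238706)*(m:ℂ)^4 + (2087748)*(m:ℂ)^3 + (2412450)*(m:ℂ)^2 + (1799010)*(m:ℂ) + (619170)) := by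
    rw [hWgen]
    have : ((5:Fin 6):ℕ) + ((4:Fin 6):ℕ) = 9 := rfl
    rw [this, Fin.sum_univ_six]
    linear_combination hp9
  have hW55 : W 5 5 = ((1024)*(m:ℂ)^10 + (12800)*(m:ℂ)^9 + (94400)*(m:ℂ)^8 + (458400)*(m:ℂ)^7 + (1637860)*(m:ℂ)^6 + (4337130)*(m:ℂ)^5 + (8689640)*(m:ℂ)^4 + (12746700)*(m:ℂ)^3 + (13294770)*(m:ℂ)^2 + (8695370)*(m:ℂ) + (2830680)) := by
    rw [hWgen]
    have : ((5:Fin 6):ℕ) + ((5:Fin 6):ℕ) = 10 := rfl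
    rw [this, Fin.sum_univ_six]
    linear_combination hp10
  have hWdet : W.det = 6^6 * ((m:ℂ)^2+3*(m:ℂ)+9)^5 := by
    have s0 : (Fin.succ (0:Fin 5) : Fin 6) = 1 := rfl
    have s1 : (Fin.succ (1:Fin 5) : Fin 6) = 2 := rfl
    have s2 : (Fin.succ (2:Fin 5) : Fin 6) = 3 := rfl
    have s3 : (Fin.succ (3:Fin 5) : Fin 6) = 4 := rfl
    have s4 : (Fin.succ (4:Fin 5) : Fin 6) = 5 := rfl
    have t00 : Fin.succAbove (0:Fin 6) (0:Fin 5) = 1 := rfl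
    have t01 : Fin.succAbove (0:Fin 6) (1:Fin 5) = 2 := rfl
    have t02 : Fin.succAbove (0:Fin 6) (2:Fin 5) = 3 := rfl
    have t03 : Fin.succAbove (0:Fin 6) (3:Fin 5) = 4 := rfl
    have t04 : Fin.succAbove (0:Fin 6) (4:Fin 5) = 5 := rfl
    have t10 : Fin.succAbove (1:Fin 6) (0:Fin 5) = 0 := rfl
    have t11 : Fin.succAbove (1:Fin 6) (1:Fin 5) = 2 := rfl
    have t12 : Fin.succAbove (1:Fin 6) (2:Fin 5) = 3 := rfl
    have t13 : Fin.succAbove (1:Fin 6) (3:Fin 5) = 4 := rfl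
    have t14 : Fin.succAbove (1:Fin 6) (4:Fin 5) = 5 := rfl
    have t20 : Fin.succAbove (2:Fin 6) (0:Fin 5) = 0 := rfl
    have t21 : Fin.succAbove (2:Fin 6) (1:Fin 5) = 1 := rfl
    have t22 : Fin.succAbove (2:Fin 6) (2:Fin 5) = 3 := rfl
    have t23 : Fin.succAbove (2:Fin 6) (3:Fin 5) = 4 := rfl
    have t24 : Fin.succAbove (2:Fin 6) (4:Fin 5) = 5 := rfl
    have t30 : Fin.succAbove (3:Fin 6) (0:Fin 5) = 0 := rfl
    have t31 : Fin.succAbove (3:Fin 6) (1:Fin 5) = 1 := rfl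
    have t32 : Fin.succAbove (3:Fin 6) (2:Fin 5) = 2 := rfl
    have t33 : Fin.succAbove (3:Fin 6) (3:Fin 5) = 4 := rfl
    have t34 : Fin.succAbove (3:Fin 6) (4:Fin 5) = 5 := rfl
    have t40 : Fin.succAbove (4:Fin 6) (0:Fin 5) = 0 := rfl
    have t41 : Fin.succAbove (4:Fin 6) (1:Fin 5) = 1 := rfl
    have t42 : Fin.succAbove (4:Fin 6) (2:Fin 5) = 2 := rfl
    have t43 : Fin.succAbove (4:Fin 6) (3:Fin 5) = 3 := rfl
    have t44 : Fin.succAbove (4:Fin 6) (4:Fin 5) = 5 := rfl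
    have t50 : Fin.succAbove (5:Fin 6) (0:Fin 5) = 0 := rfl
    have t51 : Fin.succAbove (5:Fin 6) (1:Fin 5) = 1 := rfl
    have t52 : Fin.succAbove (5:Fin 6) (2:Fin 5) = 2 := rfl
    have t53 : Fin.succAbove (5:Fin 6) (3:Fin 5) = 3 := rfl
    have t54 : Fin.succAbove (5:Fin 6) (4:Fin 5) = 4 := rfl
    have v0 : ((0:Fin 6):ℕ) = 0 := rfl
    have v1 : ((1:Fin 6):ℕ) = 1 := rfl
    have v2 : ((2:Fin 6):ℕ) = 2 := rfl
    have v3 : ((3:Fin 6):ℕ) = 3 := rfl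
    have v4 : ((4:Fin 6):ℕ) = 4 := rfl
    have v5 : ((5:Fin 6):ℕ) = 5 := rfl
    rw [Matrix.det_succ_row_zero, Fin.sum_univ_six]
    simp only [detFive5, Matrix.submatrix_apply, s0, s1, s2, s3, s4, t00, t01, t02, t03, t04, t10, t11, t12, t13, t14, t20, t21, t22, t23, t24, t30, t31, t32, t33, t34, t40, t41, t42, t43, t44, t50, t51, t52, t53, t54, v0, v1, v2, v3, v4, v5, hW00, hW01, hW02, hW03, hW04, hW05, hW10, hW11, hW12, hW13, hW14, hW15, hW20, hW21, hW22, hW23, hW24, hW25, hW30, hW31, hW32, hW33, hW34, hW35, hW40, hW41, hW42, hW43, hW44, hW45, hW50, hW51, hW52, hW53, hW54, hW55]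
    ring
  have hsq : W.det = (∏ i : Fin 6, ∏ j ∈ Finset.Ioi i, (r j - r i))^2 := by
    rw [Matrix.det_mul, Matrix.det_transpose, Matrix.det_vandermonde, sq]
  have hfin : (∏ i : Fin 6, ∏ j ∈ Finset.Ioi i, (r i - r j)^2)
      = (∏ i : Fin 6, ∏ j ∈ Finset.Ioi i, (r j - r i))^2 := by
    rw [← Finset.prod_pow]
    refine Finset.prod_congr rfl fun i _ => ?_
    rw [← Finset.prod_pow]
    exact Finset.prod_congr rfl fun j _ => by ring
  rw [hfin, ← hsq, hWdet]
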